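/- Let E be a separable real Banach space, let (Z_m)_{m∈ℕ} be random vectors in E defined on a common probability space (possibly dependent), let (Z̃_m)_{m∈ℕ} ⊂ E be deterministic, let (σ_m)_{m∈ℕ} be positive reals and C, c > 0, and suppose: for every m, Z_m is linearly concentrated around Z̃_m with observable diameter σ_m and constants C, c; almost surely Σ_{m∈ℕ} ‖Z_m‖ < ∞; the series Σ_{m∈ℕ} Z̃_m converges in E; and Σ_{m∈ℕ} σ_m < ∞. Then there exist constants C', c' > 0 depending only on C and c such that Σ_{m∈ℕ} Z_m is linearly concentrated around Σ_{m∈ℕ} Z̃_m with observable diameter Σ_{m∈ℕ} σ_m and constants C', c'. -/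

import Mathlib

open MeasureTheory ProbabilityTheory Real Filter Topology

open scoped ENNReal

section AuxLemmas

open Set

lemma aux_tendsto_exp {b : ℝ} (hb : 0 < b) :
    Tendsto (fun x : ℝ => Real.exp (-b * x ^ 2)) atTop (𝓝 0) := by
  have h1 : Tendsto (fun x : ℝ => -b * x ^ 2) atTop atBot := by
    have h2 : Tendsto (fun x : ℝ => x ^ 2) atTop atTop :=
      tendsto_pow_atTop (by norm_num)
    have := h2.const_mul_atTop hb
    have h3 : Tendsto (fun x : ℝ => -(b * x ^ 2)) atTop atBot := tendsto_neg_atTop_atBot.comp this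
    simpa [neg_mul] using h3
  exact Real.tendsto_exp_atBot.comp h1

lemma aux_integral_gauss {b : ℝ} (hb : 0 < b) :
    ∫ x in Ioi (0:ℝ), x * Real.exp (-b * x ^ 2) = 1 / (2 * b) := by
  have hderiv : ∀ x ∈ Ici (0:ℝ),
      HasDerivAt (fun y : ℝ => -(1 / (2 * b)) * Real.exp (-b * y ^ 2))
        (x * Real.exp (-b * x ^ 2)) x := by
    intro x _
    have h1 : HasDerivAt (fun y : ℝ => -b * y ^ 2) (-b * (2 * x)) x := by
      simpa [mul_comm] using ((hasDerivAt_pow 2 x).const_mul (-b))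
    have h2 := (h1.exp).const_mul (-(1 / (2 * b)))
    refine h2.congr_deriv ?_
    field_simp
  have hint : IntegrableOn (fun x : ℝ => x * Real.exp (-b * x ^ 2)) (Ioi 0) :=
    (integrable_mul_exp_neg_mul_sq hb).integrableOn
  have htend : Tendsto (fun y : ℝ => -(1 / (2 * b)) * Real.exp (-b * y ^ 2)) atTop (𝓝 0) := by
    have := (aux_tendsto_exp hb).const_mul (-(1 / (2 * b)))
    simpa using this
  have := integral_Ioi_of_hasDerivAt_of_tendsto' hderiv hint htend
  rw [this]
  simp [Real.exp_zero]

set_option maxHeartbeats 1000000 in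
lemma aux_envelope {Ω : Type} [MeasurableSpace Ω] (μ : Measure Ω)
    (g : Ω → ℝ) (C c σ : ℝ) (hC : 0 < C) (hc : 0 < c) (hσ : 0 < σ)
    (htail : ∀ t : ℝ, 0 < t →
      μ {ω | t ≤ |g ω|} ≤ ENNReal.ofReal (C * Real.exp (-c * (t / σ) ^ 2))) :
    ∃ Y : Ω → ℝ, Measurable Y ∧ (∀ ω, 0 ≤ Y ω) ∧ (∀ᵐ ω ∂μ, |g ω| ≤ Y ω) ∧
      ∀ t : ℝ, 0 < t →
        μ {ω | t ≤ Y ω} ≤ ENNReal.ofReal (C * Real.exp (-c * (t / σ) ^ 2)) := by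
  set B : ℝ → ℝ := fun t => C * Real.exp (-c * (t / σ) ^ 2) with hB
  have hBcont : Continuous B := by
    apply continuous_const.mul
    exact Real.continuous_exp.comp (by continuity)
  set A : ℚ → Set Ω := fun q => ⋂ (r : ℚ) (_ : r ≤ q), toMeasurable μ {ω | (r:ℝ) < |g ω|}
    with hA
  have hAmeas : ∀ q, MeasurableSet (A q) := fun q =>
    MeasurableSet.iInter fun r => MeasurableSet.iInter fun _ => measurableSet_toMeasurable μ _
  have hAmono : ∀ q r : ℚ, q ≤ r → A r ⊆ A q := by
    intro q r hqr ω hω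
    simp only [hA, Set.mem_iInter] at hω ⊢
    intro s hs
    exact hω s (hs.trans hqr)
  have hBA : ∀ q : ℚ, {ω | (q:ℝ) < |g ω|} ⊆ A q := by
    intro q ω hω
    simp only [hA, Set.mem_iInter]
    intro r hr
    apply subset_toMeasurable
    have hω' : (q:ℝ) < |g ω| := hω
    exact Set.mem_setOf_eq ▸ lt_of_le_of_lt (by exact_mod_cast hr : (r:ℝ) ≤ (q:ℝ)) hω'
  have hAle : ∀ q : ℚ, 0 < (q:ℝ) → μ (A q) ≤ ENNReal.ofReal (B q) := by
    intro q hq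
    have h1 : A q ⊆ toMeasurable μ {ω | (q:ℝ) < |g ω|} := by
      intro ω hω
      simp only [hA, Set.mem_iInter] at hω
      exact hω q le_rfl
    calc μ (A q) ≤ μ (toMeasurable μ {ω | (q:ℝ) < |g ω|}) := measure_mono h1
      _ = μ {ω | (q:ℝ) < |g ω|} := measure_toMeasurable _
      _ ≤ μ {ω | (q:ℝ) ≤ |g ω|} := measure_mono (Set.setOf_subset_setOf.2 fun ω h => le_of_lt h)
      _ ≤ ENNReal.ofReal (B q) := htail q hq
  set G : Ω → ℝ≥0∞ := fun ω => ⨆ q : ℚ, (A q).indicator (fun _ => ENNReal.ofReal (q:ℝ)) ω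
    with hG
  have hGmeas : Measurable G :=
    Measurable.iSup fun q => measurable_const.indicator (hAmeas q)
  have hle : ∀ ω, ENNReal.ofReal |g ω| ≤ G ω := by
    intro ω
    rcases eq_or_ne (G ω) ∞ with h | h
    · simp [h]
    by_contra hlt
    push_neg at hlt
    have h1 : (G ω).toReal < |g ω| := (ENNReal.lt_ofReal_iff_toReal_lt h).1 hlt
    obtain ⟨q, hq1, hq2⟩ := exists_rat_btwn h1
    have hmem : ω ∈ A q := hBA q hq2
    have h2 : ENNReal.ofReal (q:ℝ) ≤ G ω :=
      le_iSup_of_le q (by rw [Set.indicator_of_mem hmem])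
    have hq0 : (0:ℝ) ≤ q := ENNReal.toReal_nonneg.trans hq1.le
    have h3 : (q:ℝ) ≤ (G ω).toReal := by
      have := ENNReal.toReal_mono h h2
      rwa [ENNReal.toReal_ofReal hq0] at this
    linarith
  have tailG : ∀ q : ℚ, {ω | ENNReal.ofReal (q:ℝ) < G ω} ⊆ A q := by
    intro q ω hω
    simp only [Set.mem_setOf_eq, hG, lt_iSup_iff] at hω
    obtain ⟨r, hr⟩ := hω
    have hωr : ω ∈ A r := by
      by_contra hn
      rw [Set.indicator_of_notMem hn] at hr
      exact (not_lt.2 zero_le) hr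
    rw [Set.indicator_of_mem hωr] at hr
    have hqr : q ≤ r := by
      by_contra hn
      push_neg at hn
      exact absurd hr (not_lt.2 (ENNReal.ofReal_le_ofReal (by exact_mod_cast hn.le)))
    exact hAmono q r hqr hωr
  have hGtop : μ {ω | G ω = ∞} = 0 := by
    have hsub : ∀ n : ℕ, {ω | G ω = ∞} ⊆ A ((n:ℚ) + 1) := by
      intro n ω hω
      apply tailG
      simp only [Set.mem_setOf_eq] at hω ⊢
      rw [hω]
      exact ENNReal.ofReal_lt_top.trans_le le_top
    have hbd : ∀ n : ℕ, μ {ω | G ω = ∞} ≤ ENNReal.ofReal (B ((n:ℚ) + 1)) := by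
      intro n
      have h1 := measure_mono (μ := μ) (hsub n)
      have h2 := hAle ((n:ℚ) + 1) (by push_cast; positivity)
      push_cast at h2 ⊢
      exact h1.trans h2
    have hBtend : Tendsto B atTop (𝓝 0) := by
      have hxσ : Tendsto (fun x : ℝ => x / σ) atTop atTop :=
        tendsto_id.atTop_div_const hσ
      have h2 := (aux_tendsto_exp hc).comp hxσ
      have h3 := h2.const_mul C
      simpa [hB, Function.comp] using h3
    have htend : Tendsto (fun n : ℕ => ENNReal.ofReal (B (((n:ℚ):ℝ) + 1))) atTop (𝓝 0) := by
      rw [show (0:ℝ≥0∞) = ENNReal.ofReal 0 by simp]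
      apply ENNReal.tendsto_ofReal
      have h1 : Tendsto (fun n : ℕ => ((n:ℝ) + 1)) atTop atTop :=
        tendsto_atTop_add_const_right _ 1 tendsto_natCast_atTop_atTop
      exact hBtend.comp h1
    have := ge_of_tendsto' htend (fun n => by exact_mod_cast hbd n)
    simpa using this
  refine ⟨fun ω => (G ω).toReal, hGmeas.ennreal_toReal, fun ω => ENNReal.toReal_nonneg, ?_, ?_⟩
  · have hae : ∀ᵐ ω ∂μ, G ω ≠ ∞ := by
      rw [MeasureTheory.ae_iff]
      simpa using hGtop
    filter_upwards [hae] with ω hω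
    have := hle ω
    have h2 := ENNReal.toReal_mono hω this
    rwa [ENNReal.toReal_ofReal (abs_nonneg _)] at h2
  · intro t ht
    have hBtendcont : ∀ (qs : ℕ → ℝ), Tendsto qs atTop (𝓝 t) →
        Tendsto (fun n => ENNReal.ofReal (B (qs n))) atTop (𝓝 (ENNReal.ofReal (B t))) :=
      fun qs hqs => (ENNReal.continuous_ofReal.tendsto _).comp ((hBcont.tendsto t).comp hqs)
    have key : ∀ q : ℚ, 0 < (q:ℝ) → (q:ℝ) < t →
        μ {ω | t ≤ (G ω).toReal} ≤ ENNReal.ofReal (B q) := by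
      intro q hq0 hqt
      have hsub : {ω | t ≤ (G ω).toReal} ⊆ A q := by
        intro ω hω
        simp only [Set.mem_setOf_eq] at hω
        apply tailG
        simp only [Set.mem_setOf_eq]
        rcases eq_or_ne (G ω) ∞ with h | h
        · rw [h]; exact ENNReal.ofReal_lt_top.trans_le le_top
        calc ENNReal.ofReal (q:ℝ) < ENNReal.ofReal t := (ENNReal.ofReal_lt_ofReal_iff ht).2 hqt
          _ ≤ ENNReal.ofReal ((G ω).toReal) := ENNReal.ofReal_le_ofReal hω
          _ = G ω := ENNReal.ofReal_toReal h
      exact (measure_mono hsub).trans (hAle q hq0)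
    -- choose rational sequence increasing to t
    have hexr : ∀ n : ℕ, ∃ q : ℚ, max (t - 1/(n+1)) (t/2) < (q:ℝ) ∧ (q:ℝ) < t := by
      intro n
      apply exists_rat_btwn
      apply max_lt
      · have : (0:ℝ) < 1/(n+1) := by positivity
        linarith
      · linarith
    choose qs hq1 hq2 using hexr
    have hq0 : ∀ n, 0 < ((qs n : ℚ):ℝ) := fun n =>
      lt_of_le_of_lt (by positivity : (0:ℝ) ≤ t/2) (lt_of_le_of_lt (le_max_right _ _) (hq1 n))
    have hqlim : Tendsto (fun n => ((qs n : ℚ):ℝ)) atTop (𝓝 t) := by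
      have hlow : Tendsto (fun n : ℕ => max (t - 1/(n+1)) (t/2)) atTop (𝓝 (max t (t/2))) := by
        apply Tendsto.max _ tendsto_const_nhds
        have := tendsto_one_div_add_atTop_nhds_zero_nat (𝕜 := ℝ)
        have h2 : Tendsto (fun n : ℕ => t - 1/((n:ℝ)+1)) atTop (𝓝 (t - 0)) :=
          Tendsto.sub tendsto_const_nhds this
        simpa using h2
      rw [max_eq_left (by linarith : t/2 ≤ t)] at hlow
      exact tendsto_of_tendsto_of_tendsto_of_le_of_le hlow tendsto_const_nhds
        (fun n => (hq1 n).le) (fun n => (hq2 n).le)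
    exact ge_of_tendsto' (hBtendcont _ hqlim) (fun n => key (qs n) (hq0 n) (hq2 n))

lemma aux_mgf {Ω : Type} [MeasurableSpace Ω] (μ : Measure Ω) [IsProbabilityMeasure μ]
    (Y : Ω → ℝ) (hY : Measurable Y) (hY0 : ∀ ω, 0 ≤ Y ω) (C c σ : ℝ)
    (hC : 0 < C) (hc : 0 < c) (hσ : 0 < σ)
    (htail : ∀ t : ℝ, 0 < t →
      μ {ω | t ≤ Y ω} ≤ ENNReal.ofReal (C * Real.exp (-c * (t / σ) ^ 2))) :
    ∫⁻ ω, ENNReal.ofReal (Real.exp ((c/2) * (Y ω / σ) ^ 2)) ∂μ ≤ ENNReal.ofReal (1 + C) := by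
  set f : Ω → ℝ := fun ω => Y ω / σ with hf
  have hfmeas : Measurable f := hY.div_const σ
  have hf0 : ∀ ω, 0 ≤ f ω := fun ω => div_nonneg (hY0 ω) hσ.le
  have hftail : ∀ t : ℝ, 0 < t →
      μ {ω | t ≤ f ω} ≤ ENNReal.ofReal (C * Real.exp (-c * t ^ 2)) := by
    intro t ht
    have h1 : {ω | t ≤ f ω} = {ω | t * σ ≤ Y ω} := by
      ext ω; simp only [Set.mem_setOf_eq, hf, le_div_iff₀ hσ]
    rw [h1]
    have := htail (t * σ) (by positivity)
    rwa [mul_div_assoc, div_self hσ.ne', mul_one] at this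
  set g : ℝ → ℝ := fun t => c * t * Real.exp ((c/2) * t ^ 2) with hg
  have hgcont : Continuous g := by
    apply (continuous_const.mul continuous_id).mul
    exact Real.continuous_exp.comp (by continuity)
  have hgE : ∀ x : ℝ, ∫ t in (0:ℝ)..x, g t = Real.exp ((c/2) * x ^ 2) - 1 := by
    intro x
    have hderiv : ∀ t ∈ Set.uIcc (0:ℝ) x,
        HasDerivAt (fun u : ℝ => Real.exp ((c/2) * u ^ 2)) (g t) t := by
      intro t _
      have h1 : HasDerivAt (fun u : ℝ => (c/2) * u ^ 2) ((c/2) * (2 * t)) t := by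
        simpa [mul_comm] using ((hasDerivAt_pow 2 t).const_mul (c/2))
      have h2 := h1.exp
      convert h2 using 1
      rw [hg]; ring
    have := intervalIntegral.integral_eq_sub_of_hasDerivAt hderiv
      (hgcont.intervalIntegrable 0 x)
    rw [this]
    simp [Real.exp_zero]
  -- layer cake
  have layer : ∫⁻ ω, ENNReal.ofReal (∫ t in (0:ℝ)..f ω, g t) ∂μ =
      ∫⁻ t in Ioi (0:ℝ), μ {a | t ≤ f a} * ENNReal.ofReal (g t) := by
    apply lintegral_comp_eq_lintegral_meas_le_mul μ (ae_of_all _ hf0) hfmeas.aemeasurable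
    · exact fun t _ => hgcont.intervalIntegrable 0 t
    · refine (ae_restrict_iff' measurableSet_Ioi).2 (ae_of_all _ fun t ht => ?_)
      have : (0:ℝ) < t := ht
      rw [hg]
      positivity
  have step3 : ∫⁻ t in Ioi (0:ℝ), μ {a | t ≤ f a} * ENNReal.ofReal (g t) ≤
      ∫⁻ t in Ioi (0:ℝ), ENNReal.ofReal (C * c * t * Real.exp (-(c/2) * t ^ 2)) := by
    apply setLIntegral_mono' measurableSet_Ioi
    intro t ht
    have h1 : μ {a | t ≤ f a} * ENNReal.ofReal (g t) ≤
        ENNReal.ofReal (C * Real.exp (-c * t ^ 2)) * ENNReal.ofReal (g t) :=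
      mul_le_mul_left (hftail t ht) _
    refine h1.trans (le_of_eq ?_)
    rw [← ENNReal.ofReal_mul (by positivity)]
    congr 1
    rw [hg, mul_comm (C * Real.exp (-c * t^2))]
    rw [show c * t * Real.exp ((c/2) * t^2) * (C * Real.exp (-c * t^2))
        = C * c * t * (Real.exp ((c/2) * t^2) * Real.exp (-c * t^2)) by ring]
    rw [← Real.exp_add]
    congr 2
    ring
  have step5 : ∫⁻ t in Ioi (0:ℝ), ENNReal.ofReal (C * c * t * Real.exp (-(c/2) * t ^ 2)) =
      ENNReal.ofReal (∫ t in Ioi (0:ℝ), C * c * t * Real.exp (-(c/2) * t ^ 2)) := by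
    rw [← ofReal_integral_eq_lintegral_ofReal]
    · have h1 : Integrable (fun t : ℝ => t * Real.exp (-(c/2) * t^2)) :=
        integrable_mul_exp_neg_mul_sq (by positivity)
      have h2 := (h1.const_mul (C * c)).integrableOn (s := Ioi 0)
      apply h2.congr_fun ?_ measurableSet_Ioi
      intro t _; ring
    · refine (ae_restrict_iff' measurableSet_Ioi).2 (ae_of_all _ fun t ht => ?_)
      have : (0:ℝ) < t := ht
      positivity
  have step6 : ∫ t in Ioi (0:ℝ), C * c * t * Real.exp (-(c/2) * t ^ 2) = C := by
    have h1 : ∀ t : ℝ, C * c * t * Real.exp (-(c/2) * t ^ 2)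
        = (C * c) * (t * Real.exp (-(c/2) * t ^ 2)) := fun t => by ring
    simp_rw [h1]
    rw [integral_const_mul, aux_integral_gauss (by positivity : (0:ℝ) < c/2)]
    field_simp
  -- combine
  have main : ∫⁻ ω, ENNReal.ofReal (Real.exp ((c/2) * (f ω) ^ 2)) ∂μ ≤ ENNReal.ofReal (1 + C) := by
    have pt : ∀ ω, ENNReal.ofReal (Real.exp ((c/2) * (f ω) ^ 2)) ≤
        ENNReal.ofReal (∫ t in (0:ℝ)..f ω, g t) + 1 := by
      intro ω
      rw [hgE]
      calc ENNReal.ofReal (Real.exp ((c/2) * (f ω)^2))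
          = ENNReal.ofReal ((Real.exp ((c/2) * (f ω)^2) - 1) + 1) := by ring_nf
        _ ≤ ENNReal.ofReal (Real.exp ((c/2) * (f ω)^2) - 1) + ENNReal.ofReal 1 :=
            ENNReal.ofReal_add_le
        _ = ENNReal.ofReal (Real.exp ((c/2) * (f ω)^2) - 1) + 1 := by simp
    calc ∫⁻ ω, ENNReal.ofReal (Real.exp ((c/2) * (f ω) ^ 2)) ∂μ
        ≤ ∫⁻ ω, (ENNReal.ofReal (∫ t in (0:ℝ)..f ω, g t) + 1) ∂μ := lintegral_mono pt
      _ = (∫⁻ ω, ENNReal.ofReal (∫ t in (0:ℝ)..f ω, g t) ∂μ) + 1 := by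
          rw [lintegral_add_right _ measurable_const]
          simp
      _ ≤ ENNReal.ofReal C + 1 := by
          gcongr
          rw [layer]
          exact step3.trans (le_of_eq (step5.trans (by rw [step6])))
      _ = ENNReal.ofReal (1 + C) := by
          rw [← ENNReal.ofReal_one, ← ENNReal.ofReal_add hC.le zero_le_one]
          congr 1; ring
  exact main

lemma aux_convex {c : ℝ} (hc : 0 < c) :
    ConvexOn ℝ (Set.Ici (0:ℝ)) (fun x => Real.exp ((c/2) * x ^ 2)) := by
  have hφd : ∀ x : ℝ, HasDerivAt (fun u : ℝ => Real.exp ((c/2) * u ^ 2))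
      (c * x * Real.exp ((c/2) * x ^ 2)) x := by
    intro x
    have h1 : HasDerivAt (fun u : ℝ => (c/2) * u ^ 2) ((c/2) * (2 * x)) x := by
      simpa [mul_comm] using ((hasDerivAt_pow 2 x).const_mul (c/2))
    have h2 := h1.exp
    convert h2 using 1
    ring
  have hφcont : Continuous (fun x : ℝ => Real.exp ((c/2) * x ^ 2)) :=
    Real.continuous_exp.comp (by continuity)
  apply MonotoneOn.convexOn_of_deriv (convex_Ici 0) hφcont.continuousOn
  · exact fun x _ => ((hφd x).differentiableAt).differentiableWithinAt
  · have hde : ∀ x : ℝ, deriv (fun u : ℝ => Real.exp ((c/2) * u ^ 2)) x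
        = c * x * Real.exp ((c/2) * x ^ 2) := fun x => (hφd x).deriv
    intro x hx y hy hxy
    rw [hde, hde]
    rw [interior_Ici] at hx hy
    have hx0 : (0:ℝ) < x := hx
    have hy0 : (0:ℝ) < y := hy
    have hexp : Real.exp ((c/2) * x ^ 2) ≤ Real.exp ((c/2) * y ^ 2) := by
      apply Real.exp_le_exp.2
      have : x ^ 2 ≤ y ^ 2 := by nlinarith
      nlinarith
    have h1 : 0 ≤ c * x := by positivity
    have h2 : c * x ≤ c * y := by nlinarith
    exact mul_le_mul h2 hexp (Real.exp_pos _).le (by positivity)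

lemma aux_jensen {c s : ℝ} (hc : 0 < c) (hs : 0 < s) (σ : ℕ → ℝ) (hσ : ∀ m, 0 < σ m)
    (y : ℕ → ℝ) (hy : ∀ m, 0 ≤ y m) (N : ℕ)
    (hσs : ∑ m ∈ Finset.range N, σ m ≤ s) :
    Real.exp ((c/2) * ((∑ m ∈ Finset.range N, y m) / s) ^ 2) ≤
      (∑ m ∈ Finset.range N, (σ m / s) * Real.exp ((c/2) * (y m / σ m) ^ 2))
        + (1 - ∑ m ∈ Finset.range N, σ m / s) := by
  set φ : ℝ → ℝ := fun x => Real.exp ((c/2) * x ^ 2) with hφ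
  set w : ℕ → ℝ := fun m => if m < N then σ m / s else 1 - ∑ k ∈ Finset.range N, σ k / s with hw
  set p : ℕ → ℝ := fun m => if m < N then y m / σ m else 0 with hp
  have hsumdiv : ∑ k ∈ Finset.range N, σ k / s ≤ 1 := by
    rw [← Finset.sum_div]
    rw [div_le_one hs]
    exact hσs
  have hw0 : ∀ m ∈ Finset.range (N+1), 0 ≤ w m := by
    intro m _
    by_cases h : m < N
    · simp only [hw, if_pos h]; exact div_nonneg (hσ m).le hs.le
    · simp only [hw, if_neg h]; linarith
  have hw1 : ∑ m ∈ Finset.range (N+1), w m = 1 := by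
    rw [Finset.sum_range_succ]
    have h1 : ∑ m ∈ Finset.range N, w m = ∑ m ∈ Finset.range N, σ m / s :=
      Finset.sum_congr rfl fun m hm => by
        simp only [hw, if_pos (Finset.mem_range.1 hm)]
    rw [h1, hw]
    simp
  have hmem : ∀ m ∈ Finset.range (N+1), p m ∈ Set.Ici (0:ℝ) := by
    intro m _
    by_cases h : m < N
    · simp only [hp, if_pos h]
      exact Set.mem_Ici.2 (div_nonneg (hy m) (hσ m).le)
    · simp only [hp, if_neg h]
      exact Set.mem_Ici.2 (le_refl 0)
  have hJ := (aux_convex hc).map_sum_le hw0 hw1 hmem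
  have harg : ∑ m ∈ Finset.range (N+1), w m • p m = (∑ m ∈ Finset.range N, y m) / s := by
    rw [Finset.sum_range_succ]
    have h1 : ∑ m ∈ Finset.range N, w m • p m = ∑ m ∈ Finset.range N, y m / s :=
      Finset.sum_congr rfl fun m hm => by
        have h := Finset.mem_range.1 hm
        simp only [hw, hp, if_pos h, smul_eq_mul]
        have h1 : σ m ≠ 0 := (hσ m).ne'
        have h2 : s ≠ 0 := hs.ne'
        field_simp
    rw [h1]
    simp only [hp, lt_irrefl, if_neg (lt_irrefl N), smul_zero, add_zero]
    rw [Finset.sum_div]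
  have hrhs : ∑ m ∈ Finset.range (N+1), w m • φ (p m) =
      (∑ m ∈ Finset.range N, (σ m / s) * Real.exp ((c/2) * (y m / σ m) ^ 2))
        + (1 - ∑ m ∈ Finset.range N, σ m / s) := by
    rw [Finset.sum_range_succ]
    have h1 : ∑ m ∈ Finset.range N, w m • φ (p m) =
        ∑ m ∈ Finset.range N, (σ m / s) * Real.exp ((c/2) * (y m / σ m) ^ 2) :=
      Finset.sum_congr rfl fun m hm => by
        have h := Finset.mem_range.1 hm
        simp only [hw, hp, hφ, if_pos h, smul_eq_mul]
    rw [h1]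
    simp only [hw, hp, hφ, if_neg (lt_irrefl N), smul_eq_mul]
    norm_num
  rw [harg, hrhs] at hJ
  exact hJ

end AuxLemmas

set_option maxHeartbeats 1000000

/-- Linear concentration around a deterministic equivalent. -/
def LinearConcentration {E : Type*} [NormedAddCommGroup E] [NormedSpace ℝ E]
    {Ω : Type*} [MeasurableSpace Ω] (μ : Measure Ω) (Z : Ω → E) (Zt : E)
    (σ C c : ℝ) : Prop :=
  ∀ f : E →L[ℝ] ℝ, ‖f‖ ≤ 1 →
    ∀ t : ℝ, 0 < t →
      μ {ω | t ≤ |f (Z ω) - f Zt|} ≤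
        ENNReal.ofReal (C * Real.exp (-c * (t / σ) ^ 2))

/-- Concentration of series of linearly concentrated vectors: if `Σ‖Z_m‖ < ∞` almost
surely, `Σ Z̃_m` converges, and `Σ σ_m < ∞`, then `Σ Z_m` is linearly concentrated around
`Σ Z̃_m` with observable diameter `Σ σ_m` and constants depending only on `C, c`. -/
theorem stmt_8 (C c : ℝ) (hC : 0 < C) (hc : 0 < c) :
    ∃ C' c' : ℝ, 0 < C' ∧ 0 < c' ∧
      ∀ (E : Type) (_ : NormedAddCommGroup E) (_ : NormedSpace ℝ E),
        CompleteSpace E → SecondCountableTopology E →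
      ∀ (Ω : Type) (_ : MeasureSpace Ω), IsProbabilityMeasure (ℙ : Measure Ω) →
      ∀ (Z : ℕ → Ω → E) (Zt : ℕ → E) (σ : ℕ → ℝ), (∀ m, 0 < σ m) →
        (∀ m, LinearConcentration ℙ (Z m) (Zt m) (σ m) C c) →
        (∀ᵐ ω ∂(ℙ : Measure Ω), Summable (fun m => ‖Z m ω‖)) →
        Summable σ →
        ∀ S : E, Tendsto (fun N => ∑ m ∈ Finset.range N, Zt m) atTop (𝓝 S) →
          LinearConcentration ℙ (fun ω => ∑' m, Z m ω) S (∑' m, σ m) C' c' := by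
  refine ⟨C + 2, c / 2, by linarith, by positivity, ?_⟩
  intro E _ _ hcomp hsc Ω _ hprob Z Zt σ hσ hconc hsum hσsum S hS
  haveI := hcomp
  haveI := hprob
  intro f hf t ht
  set μ : Measure Ω := ℙ with hμ
  set s : ℝ := ∑' m, σ m with hsdef
  have hs : 0 < s := Summable.tsum_pos hσsum (fun i => (hσ i).le) 0 (hσ 0)
  have hpartial : ∀ N, ∑ m ∈ Finset.range N, σ m ≤ s := fun N =>
    Summable.sum_le_tsum _ (fun i _ => (hσ i).le) hσsum
  have hsumdiv : ∀ N, ∑ m ∈ Finset.range N, σ m / s ≤ 1 := by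
    intro N
    rw [← Finset.sum_div, div_le_one hs]
    exact hpartial N
  -- envelopes
  have hYex : ∀ m : ℕ, ∃ Y : Ω → ℝ, Measurable Y ∧ (∀ ω, 0 ≤ Y ω) ∧
      (∀ᵐ ω ∂μ, |f (Z m ω) - f (Zt m)| ≤ Y ω) ∧
      ∀ u : ℝ, 0 < u →
        μ {ω | u ≤ Y ω} ≤ ENNReal.ofReal (C * Real.exp (-c * (u / σ m) ^ 2)) :=
    fun m => aux_envelope μ _ C c (σ m) hC hc (hσ m) (fun u hu => hconc m f hf u hu)
  choose Y hYmeas hY0 hYae hYtail using hYex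
  have hmom : ∀ m : ℕ, ∫⁻ ω, ENNReal.ofReal (Real.exp ((c/2) * (Y m ω / σ m) ^ 2)) ∂μ
      ≤ ENNReal.ofReal (1 + C) :=
    fun m => aux_mgf μ (Y m) (hYmeas m) (hY0 m) C c (σ m) hC hc (hσ m) (hYtail m)
  set R : ℕ → Ω → ℝ := fun N ω => ∑ m ∈ Finset.range N, Y m ω with hR
  have hRmeas : ∀ N, Measurable (R N) := fun N =>
    Finset.measurable_sum _ (fun m _ => hYmeas m)
  have hR0 : ∀ N ω, 0 ≤ R N ω := fun N ω => Finset.sum_nonneg fun m _ => hY0 m ω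
  set F : ℕ → Ω → ℝ≥0∞ :=
    fun N ω => ENNReal.ofReal (Real.exp ((c/2) * (R N ω / s) ^ 2)) with hF
  have hFmeas : ∀ N, Measurable (F N) := by
    intro N
    apply Measurable.ennreal_ofReal
    exact (((hRmeas N).div_const s).pow_const 2).const_mul (c/2) |>.exp
  have hFmono : Monotone F := by
    intro N M hNM ω
    simp only [hF]
    apply ENNReal.ofReal_le_ofReal
    apply Real.exp_le_exp.2
    apply mul_le_mul_of_nonneg_left _ (by positivity : (0:ℝ) ≤ c/2)
    have h1 : R N ω ≤ R M ω :=
      Finset.sum_le_sum_of_subset_of_nonneg (Finset.range_subset_range.2 hNM)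
        (fun i _ _ => hY0 i ω)
    have h2 : (0:ℝ) ≤ R N ω / s := div_nonneg (hR0 N ω) hs.le
    have h3 : R N ω / s ≤ R M ω / s := by gcongr
    exact pow_le_pow_left₀ h2 h3 2
  set Ψ : Ω → ℝ≥0∞ := fun ω => ⨆ N, F N ω with hΨ
  have hΨmeas : Measurable Ψ := Measurable.iSup hFmeas
  -- integral bound
  have hint : ∫⁻ ω, Ψ ω ∂μ ≤ ENNReal.ofReal (C + 2) := by
    simp only [hΨ]
    rw [lintegral_iSup hFmeas hFmono]
    apply iSup_le
    intro N
    have hpt : ∀ ω, F N ω ≤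
        ENNReal.ofReal (∑ m ∈ Finset.range N, (σ m / s) * Real.exp ((c/2) * (Y m ω / σ m) ^ 2))
          + ENNReal.ofReal (1 - ∑ m ∈ Finset.range N, σ m / s) := by
      intro ω
      have hJ := aux_jensen hc hs σ hσ (fun m => Y m ω) (fun m => hY0 m ω) N (hpartial N)
      calc F N ω ≤ ENNReal.ofReal ((∑ m ∈ Finset.range N, (σ m / s) *
              Real.exp ((c/2) * (Y m ω / σ m) ^ 2))
            + (1 - ∑ m ∈ Finset.range N, σ m / s)) := ENNReal.ofReal_le_ofReal hJ
        _ ≤ _ := ENNReal.ofReal_add_le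
    calc ∫⁻ ω, F N ω ∂μ
        ≤ ∫⁻ ω, (ENNReal.ofReal (∑ m ∈ Finset.range N, (σ m / s) *
              Real.exp ((c/2) * (Y m ω / σ m) ^ 2))
            + ENNReal.ofReal (1 - ∑ m ∈ Finset.range N, σ m / s)) ∂μ := lintegral_mono hpt
      _ = (∫⁻ ω, ENNReal.ofReal (∑ m ∈ Finset.range N, (σ m / s) *
              Real.exp ((c/2) * (Y m ω / σ m) ^ 2)) ∂μ)
            + ENNReal.ofReal (1 - ∑ m ∈ Finset.range N, σ m / s) := by
          rw [lintegral_add_right _ measurable_const, lintegral_const, measure_univ, mul_one]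
      _ ≤ ENNReal.ofReal (1 + C) + 1 := by
          gcongr
          · -- main sum part
            have hptsum : ∀ ω : Ω, ENNReal.ofReal (∑ m ∈ Finset.range N, (σ m / s) *
                Real.exp ((c/2) * (Y m ω / σ m) ^ 2)) =
                ∑ m ∈ Finset.range N, ENNReal.ofReal (σ m / s) *
                  ENNReal.ofReal (Real.exp ((c/2) * (Y m ω / σ m) ^ 2)) := by
              intro ω
              rw [ENNReal.ofReal_sum_of_nonneg (fun m _ =>
                mul_nonneg (div_nonneg (hσ m).le hs.le) (Real.exp_pos _).le)]
              exact Finset.sum_congr rfl fun m _ =>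
                ENNReal.ofReal_mul (div_nonneg (hσ m).le hs.le)
            simp_rw [hptsum]
            have hmeasM : ∀ m : ℕ, Measurable fun ω =>
                ENNReal.ofReal (Real.exp ((c/2) * (Y m ω / σ m) ^ 2)) := fun m =>
              ((((hYmeas m).div_const (σ m)).pow_const 2).const_mul (c/2)).exp.ennreal_ofReal
            rw [lintegral_finset_sum _ (fun m _ => (hmeasM m).const_mul _)]
            calc ∑ m ∈ Finset.range N, ∫⁻ ω, ENNReal.ofReal (σ m / s) *
                  ENNReal.ofReal (Real.exp ((c/2) * (Y m ω / σ m) ^ 2)) ∂μ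
                = ∑ m ∈ Finset.range N, ENNReal.ofReal (σ m / s) *
                  ∫⁻ ω, ENNReal.ofReal (Real.exp ((c/2) * (Y m ω / σ m) ^ 2)) ∂μ := by
                  exact Finset.sum_congr rfl fun m _ => lintegral_const_mul _ (hmeasM m)
              _ ≤ ∑ m ∈ Finset.range N, ENNReal.ofReal (σ m / s) * ENNReal.ofReal (1 + C) :=
                  Finset.sum_le_sum fun m _ => mul_le_mul_right (hmom m) _
              _ = (∑ m ∈ Finset.range N, ENNReal.ofReal (σ m / s)) * ENNReal.ofReal (1 + C) :=
                  (Finset.sum_mul _ _ _).symm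
              _ ≤ 1 * ENNReal.ofReal (1 + C) := by
                  apply mul_le_mul_left
                  rw [← ENNReal.ofReal_sum_of_nonneg (fun m _ => div_nonneg (hσ m).le hs.le),
                    ← ENNReal.ofReal_one]
                  exact ENNReal.ofReal_le_ofReal (hsumdiv N)
              _ = ENNReal.ofReal (1 + C) := one_mul _
          · exact ENNReal.ofReal_le_one.2 (by
              have := Finset.sum_nonneg (fun m (_ : m ∈ Finset.range N) =>
                div_nonneg (hσ m).le hs.le)
              linarith)
      _ ≤ ENNReal.ofReal (C + 2) := by
          rw [show C + 2 = (1 + C) + 1 by ring, ENNReal.ofReal_add (by linarith) zero_le_one,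
            ENNReal.ofReal_one]
  -- a.e. domination of the target by Ψ
  have hae : ∀ᵐ ω ∂μ, t ≤ |f (∑' m, Z m ω) - f S| →
      ENNReal.ofReal (Real.exp ((c/2) * (t/s) ^ 2)) ≤ Ψ ω := by
    filter_upwards [hsum, MeasureTheory.ae_all_iff.2 hYae] with ω hsummable hYω
    intro htle
    have hsumZ : Summable fun m => Z m ω := Summable.of_norm hsummable
    have h1 : Tendsto (fun N => ∑ m ∈ Finset.range N, Z m ω) atTop (𝓝 (∑' m, Z m ω)) :=
      hsumZ.hasSum.tendsto_sum_nat
    have h2 : Tendsto (fun N => ∑ m ∈ Finset.range N, (f (Z m ω) - f (Zt m))) atTop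
        (𝓝 (f (∑' m, Z m ω) - f S)) := by
      have h2a : Tendsto (fun N => f (∑ m ∈ Finset.range N, Z m ω)
          - f (∑ m ∈ Finset.range N, Zt m)) atTop (𝓝 (f (∑' m, Z m ω) - f S)) :=
        ((f.continuous.tendsto _).comp h1).sub ((f.continuous.tendsto _).comp hS)
      apply h2a.congr
      intro N
      rw [map_sum, map_sum, ← Finset.sum_sub_distrib]
    have h4 : Tendsto (fun N => ENNReal.ofReal (Real.exp ((c/2) *
        ((∑ m ∈ Finset.range N, (f (Z m ω) - f (Zt m))) / s) ^ 2))) atTop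
        (𝓝 (ENNReal.ofReal (Real.exp ((c/2) * ((f (∑' m, Z m ω) - f S) / s) ^ 2)))) := by
      apply (ENNReal.continuous_ofReal.tendsto _).comp
      apply (Real.continuous_exp.tendsto _).comp
      have hcont : Continuous fun y : ℝ => (c/2) * (y / s) ^ 2 := by continuity
      exact (hcont.tendsto _).comp h2
    have h5 : ∀ N : ℕ, ENNReal.ofReal (Real.exp ((c/2) *
        ((∑ m ∈ Finset.range N, (f (Z m ω) - f (Zt m))) / s) ^ 2)) ≤ Ψ ω := by
      intro N
      have hb : |∑ m ∈ Finset.range N, (f (Z m ω) - f (Zt m))| ≤ R N ω := by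
        refine (Finset.abs_sum_le_sum_abs _ _).trans ?_
        exact Finset.sum_le_sum fun m _ => hYω m
      have habs := abs_le.1 hb
      have hsq : (∑ m ∈ Finset.range N, (f (Z m ω) - f (Zt m))) ^ 2 ≤ (R N ω) ^ 2 :=
        sq_le_sq' habs.1 habs.2
      have hsq2 : ((∑ m ∈ Finset.range N, (f (Z m ω) - f (Zt m))) / s) ^ 2
          ≤ (R N ω / s) ^ 2 := by
        rw [div_pow, div_pow]
        gcongr
      have hle : ENNReal.ofReal (Real.exp ((c/2) *
          ((∑ m ∈ Finset.range N, (f (Z m ω) - f (Zt m))) / s) ^ 2)) ≤ F N ω := by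
        simp only [hF]
        exact ENNReal.ofReal_le_ofReal (Real.exp_le_exp.2
          (mul_le_mul_of_nonneg_left hsq2 (by positivity)))
      exact hle.trans (le_iSup (fun N => F N ω) N)
    have h6 : ENNReal.ofReal (Real.exp ((c/2) * ((f (∑' m, Z m ω) - f S) / s) ^ 2)) ≤ Ψ ω :=
      le_of_tendsto' h4 h5
    refine le_trans ?_ h6
    apply ENNReal.ofReal_le_ofReal
    apply Real.exp_le_exp.2
    apply mul_le_mul_of_nonneg_left _ (by positivity : (0:ℝ) ≤ c/2)
    have ht2 : t ^ 2 ≤ (f (∑' m, Z m ω) - f S) ^ 2 := by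
      have h := pow_le_pow_left₀ ht.le htle 2
      rwa [sq_abs] at h
    rw [div_pow, div_pow]
    gcongr
  -- Markov
  have hκpos : (0:ℝ) < Real.exp ((c/2) * (t/s) ^ 2) := Real.exp_pos _
  have hsubset : μ {ω | t ≤ |f (∑' m, Z m ω) - f S|}
      ≤ μ {ω | ENNReal.ofReal (Real.exp ((c/2) * (t/s) ^ 2)) ≤ Ψ ω} := by
    apply measure_mono_ae
    filter_upwards [hae] with ω hω
    exact fun h => hω h
  have hmarkov := MeasureTheory.meas_ge_le_lintegral_div (μ := μ) hΨmeas.aemeasurable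
    (ε := ENNReal.ofReal (Real.exp ((c/2) * (t/s) ^ 2)))
    (by simp [ENNReal.ofReal_eq_zero, not_le, hκpos]) ENNReal.ofReal_ne_top
  calc μ {ω | t ≤ |f ((fun ω => ∑' m, Z m ω) ω) - f S|}
      ≤ μ {ω | ENNReal.ofReal (Real.exp ((c/2) * (t/s) ^ 2)) ≤ Ψ ω} := hsubset
    _ ≤ (∫⁻ ω, Ψ ω ∂μ) / ENNReal.ofReal (Real.exp ((c/2) * (t/s) ^ 2)) := hmarkov
    _ ≤ ENNReal.ofReal (C + 2) / ENNReal.ofReal (Real.exp ((c/2) * (t/s) ^ 2)) :=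
        ENNReal.div_le_div_right hint _
    _ = ENNReal.ofReal ((C + 2) * Real.exp (-(c/2) * (t/s) ^ 2)) := by
        rw [← ENNReal.ofReal_div_of_pos hκpos]
        congr 1
        rw [div_eq_mul_inv, ← Real.exp_neg]
        ring_nf
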